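/- Let S ⊆ {0,1}^n be a set of pairwise incomparable solutions with respect to m-COCZ (m even, m dividing n). Then |S| ≤ (n/m + 1)^{m/2}, and this bound is attained by any Pareto-optimal set, so the maximum cardinality of a set of mutually incomparable solutions equals (n/m + 1)^{m/2}. -/
import Mathlib

/-- Number of ones of a block `b : Fin L → Bool`. -/
def onesCount {L : ℕ} (b : Fin L → Bool) : ℕ :=
  (Finset.univ.filter (fun i : Fin L => b i = true)).card

/-- Number of zeros of a block `b : Fin L → Bool`. -/
def zerosCount {L : ℕ} (b : Fin L → Bool) : ℕ :=
  (Finset.univ.filter (fun i : Fin L => b i = false)).card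

/-- The m-COCZ benchmark, with `h = m/2` and block length `B = n/m`.
A search point is a pair: first half of length `n/2 = h*B`, and `h` blocks of
length `B` forming the second half. Objective `k` (0-based) is the ones-count
of the first half plus (ones of block `k/2` if `k` even, else zeros of block `k/2`). -/
def mCOCZ (h B : ℕ) (x : (Fin (h * B) → Bool) × (Fin h → Fin B → Bool)) :
    Fin (2 * h) → ℕ :=
  fun k =>
    onesCount x.1 +
      if (k : ℕ) % 2 = 0 then onesCount (x.2 ⟨(k : ℕ) / 2, by have := k.isLt; omega⟩)
      else zerosCount (x.2 ⟨(k : ℕ) / 2, by have := k.isLt; omega⟩)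

/-- `x` weakly dominates `y` with respect to the objective vector `f`. -/
def WeaklyDom {α : Type*} {m : ℕ} (f : α → Fin m → ℕ) (x y : α) : Prop :=
  ∀ k, f y k ≤ f x k

/-- `x` dominates `y`. -/
def Dom {α : Type*} {m : ℕ} (f : α → Fin m → ℕ) (x y : α) : Prop :=
  WeaklyDom f x y ∧ ∃ k, f y k < f x k

/-- `x` is Pareto-optimal. -/
def ParetoOpt {α : Type*} {m : ℕ} (f : α → Fin m → ℕ) (x : α) : Prop :=
  ¬ ∃ y, Dom f y x

lemma onesCount_add_zerosCount {L : ℕ} (b : Fin L → Bool) :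
    onesCount b + zerosCount b = L := by
  classical
  have h1 : (Finset.univ.filter fun i : Fin L => ¬ b i = true)
      = Finset.univ.filter fun i : Fin L => b i = false := by
    apply Finset.filter_congr; intro i _; simp
  have h2 := Finset.card_filter_add_card_filter_not
    (s := (Finset.univ : Finset (Fin L))) (p := fun i => b i = true)
  unfold onesCount zerosCount
  rw [← h1]
  simpa using h2

lemma onesCount_le {L : ℕ} (b : Fin L → Bool) : onesCount b ≤ L :=
  (Finset.card_filter_le _ _).trans (by simp)

lemma card_filter_val_lt (B c : ℕ) (hc : c ≤ B) :
    (Finset.univ.filter fun j : Fin B => (j : ℕ) < c).card = c := by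
  have he : (Finset.univ.filter fun j : Fin B => (j : ℕ) < c)
      = (Finset.range c).attachFin (fun m hm => lt_of_lt_of_le (Finset.mem_range.mp hm) hc) := by
    ext j
    simp [Finset.mem_attachFin, Finset.mem_range]
  rw [he, Finset.card_attachFin, Finset.card_range]

lemma mCOCZ_even (h B : ℕ) (x : (Fin (h * B) → Bool) × (Fin h → Fin B → Bool))
    (i : Fin h) (hi : 2 * (i : ℕ) < 2 * h) :
    mCOCZ h B x ⟨2 * (i : ℕ), hi⟩ = onesCount x.1 + onesCount (x.2 i) := by
  simp [mCOCZ, Nat.mul_mod_right, Nat.mul_div_cancel_left]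

lemma mCOCZ_odd (h B : ℕ) (x : (Fin (h * B) → Bool) × (Fin h → Fin B → Bool))
    (i : Fin h) (hi : 2 * (i : ℕ) + 1 < 2 * h) :
    mCOCZ h B x ⟨2 * (i : ℕ) + 1, hi⟩ = onesCount x.1 + zerosCount (x.2 i) := by
  have h2 : (2 * (i : ℕ) + 1) % 2 = 1 := by omega
  have h3 : (2 * (i : ℕ) + 1) / 2 = (i : ℕ) := by omega
  simp [mCOCZ, h2, h3]

/-- The construction attaining the bound. -/
def gPt (h B : ℕ) (w : Fin h → Fin (B + 1)) :
    (Fin (h * B) → Bool) × (Fin h → Fin B → Bool) :=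
  (fun _ => true, fun i j => decide ((j : ℕ) < (w i : ℕ)))

lemma gPt_fst (h B : ℕ) (w : Fin h → Fin (B + 1)) :
    onesCount (gPt h B w).1 = h * B := by
  simp [gPt, onesCount]

lemma gPt_block (h B : ℕ) (w : Fin h → Fin (B + 1)) (i : Fin h) :
    onesCount ((gPt h B w).2 i) = (w i : ℕ) := by
  have := (w i).isLt
  simp only [gPt, onesCount, decide_eq_true_eq]
  exact card_filter_val_lt B _ (by omega)

theorem mCOCZ_incomparable_card (h B : ℕ) (hh : 1 ≤ h) (hB : 1 ≤ B) :
    (∀ S : Finset ((Fin (h * B) → Bool) × (Fin h → Fin B → Bool)),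
      (∀ x ∈ S, ∀ y ∈ S, x ≠ y →
        ¬ WeaklyDom (mCOCZ h B) x y ∧ ¬ WeaklyDom (mCOCZ h B) y x) →
      S.card ≤ (B + 1) ^ h) ∧
    (∃ S : Finset ((Fin (h * B) → Bool) × (Fin h → Fin B → Bool)),
      (∀ x ∈ S, ∀ y ∈ S, x ≠ y →
        ¬ WeaklyDom (mCOCZ h B) x y ∧ ¬ WeaklyDom (mCOCZ h B) y x) ∧
      (∀ x ∈ S, ParetoOpt (mCOCZ h B) x) ∧ S.card = (B + 1) ^ h) := by
  classical
  constructor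
  · -- upper bound
    intro S hS
    have key : ∀ x ∈ S, ∀ y ∈ S,
        (∀ i, onesCount (x.2 i) = onesCount (y.2 i)) → x = y := by
      intro x hx y hy hw
      by_contra hxy
      have comp : ∀ x' y' : (Fin (h * B) → Bool) × (Fin h → Fin B → Bool),
          (∀ i, onesCount (x'.2 i) = onesCount (y'.2 i)) →
          onesCount x'.1 ≤ onesCount y'.1 → WeaklyDom (mCOCZ h B) y' x' := by
        intro x' y' hw' hle k
        simp only [mCOCZ]
        set i : Fin h := ⟨(k : ℕ) / 2, by have := k.isLt; omega⟩ with hidef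
        split
        · rw [hw' i]; exact Nat.add_le_add_right hle _
        · have h1 := onesCount_add_zerosCount (x'.2 i)
          have h2 := onesCount_add_zerosCount (y'.2 i)
          have h3 := hw' i
          omega
      rcases le_total (onesCount x.1) (onesCount y.1) with hle | hle
      · exact (hS x hx y hy hxy).2 (comp x y hw hle)
      · exact (hS x hx y hy hxy).1 (comp y x (fun i => (hw i).symm) hle)
    have hcard : S.card ≤ (Finset.univ : Finset (Fin h → Fin (B + 1))).card := by
      apply Finset.card_le_card_of_injOn
        (fun x i => (⟨onesCount (x.2 i), Nat.lt_succ_of_le (onesCount_le _)⟩ : Fin (B + 1)))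
      · exact fun _ _ => Finset.mem_univ _
      · intro x hx y hy hxy
        apply key x hx y hy
        intro i
        have := congrFun hxy i
        simpa using this
    simpa [Finset.card_univ] using hcard
  · -- the witness
    refine ⟨Finset.univ.image (gPt h B), ?_, ?_, ?_⟩
    · -- pairwise incomparable
      intro x hx y hy hxy
      obtain ⟨w, _, rfl⟩ := Finset.mem_image.mp hx
      obtain ⟨w', _, rfl⟩ := Finset.mem_image.mp hy
      have hww : w ≠ w' := by rintro rfl; exact hxy rfl
      obtain ⟨i, hi⟩ := Function.ne_iff.mp hww
      have hkl : 2 * (i : ℕ) < 2 * h := by have := i.isLt; omega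
      have hkl' : 2 * (i : ℕ) + 1 < 2 * h := by have := i.isLt; omega
      have e1 := mCOCZ_even h B (gPt h B w) i hkl
      have e2 := mCOCZ_even h B (gPt h B w') i hkl
      have o1 := mCOCZ_odd h B (gPt h B w) i hkl'
      have o2 := mCOCZ_odd h B (gPt h B w') i hkl'
      have b1 := gPt_block h B w i
      have b2 := gPt_block h B w' i
      have z1 := onesCount_add_zerosCount ((gPt h B w).2 i)
      have z2 := onesCount_add_zerosCount ((gPt h B w').2 i)
      have f1 := gPt_fst h B w
      have f2 := gPt_fst h B w'
      have hne : (w i : ℕ) ≠ (w' i : ℕ) := fun hc => hi (Fin.ext hc)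
      constructor
      · intro hwd
        have d1 := hwd ⟨2 * (i : ℕ), hkl⟩
        have d2 := hwd ⟨2 * (i : ℕ) + 1, hkl'⟩
        rw [e1, e2] at d1
        rw [o1, o2] at d2
        omega
      · intro hwd
        have d1 := hwd ⟨2 * (i : ℕ), hkl⟩
        have d2 := hwd ⟨2 * (i : ℕ) + 1, hkl'⟩
        rw [e1, e2] at d1
        rw [o1, o2] at d2
        omega
    · -- Pareto optimality
      intro x hx
      obtain ⟨w, _, rfl⟩ := Finset.mem_image.mp hx
      rintro ⟨y, hwd, k0, hk0⟩
      set i : Fin h := ⟨(k0 : ℕ) / 2, by have := k0.isLt; omega⟩ with hidef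
      have hkl : 2 * (i : ℕ) < 2 * h := by have := i.isLt; omega
      have hkl' : 2 * (i : ℕ) + 1 < 2 * h := by have := i.isLt; omega
      have d1 := hwd ⟨2 * (i : ℕ), hkl⟩
      have d2 := hwd ⟨2 * (i : ℕ) + 1, hkl'⟩
      rw [mCOCZ_even h B (gPt h B w) i hkl, mCOCZ_even h B y i hkl] at d1
      rw [mCOCZ_odd h B (gPt h B w) i hkl', mCOCZ_odd h B y i hkl'] at d2
      have z1 := onesCount_add_zerosCount ((gPt h B w).2 i)
      have z2 := onesCount_add_zerosCount (y.2 i)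
      have f1 := gPt_fst h B w
      have fy := onesCount_le y.1
      have hk0cases : k0 = (⟨2 * (i : ℕ), hkl⟩ : Fin (2 * h))
          ∨ k0 = (⟨2 * (i : ℕ) + 1, hkl'⟩ : Fin (2 * h)) := by
        have := Nat.mod_two_eq_zero_or_one (k0 : ℕ)
        rcases this with hm | hm
        · left; apply Fin.ext; simp only [hidef]; omega
        · right; apply Fin.ext; simp only [hidef]; omega
      rcases hk0cases with hc | hc
      · rw [hc] at hk0
        rw [mCOCZ_even h B (gPt h B w) i hkl, mCOCZ_even h B y i hkl] at hk0
        omega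
      · rw [hc] at hk0
        rw [mCOCZ_odd h B (gPt h B w) i hkl', mCOCZ_odd h B y i hkl'] at hk0
        omega
    · -- cardinality
      rw [Finset.card_image_of_injective _ ?inj, Finset.card_univ]
      · simp
      case inj =>
        intro w w' hww
        funext i
        have h2 : (gPt h B w).2 = (gPt h B w').2 := by rw [hww]
        have := congrFun h2 i
        have hb : onesCount ((gPt h B w).2 i) = onesCount ((gPt h B w').2 i) := by rw [this]
        rw [gPt_block, gPt_block] at hb
        exact Fin.ext hb
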